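/- arXiv:0907.2925 — 2 statements merged into one kernel-verified Lean document; each statement's English description precedes it below -/
import Mathlib

section
/- There exists a countable structure M, an automorphism α and a self-embedding σ of M such that α∘σ (in the sense: first α, then σ) is not equal to σ∘α′ for any automorphism α′; i.e. the left coset of Aut(M) determined by σ differs from the right coset. Concretely, for M an equivalence relation with exactly two infinite classes, with α swapping the classes and σ the identity on one class and a non-surjective embedding on the other, ασ ∉ σ·Aut(M). -/
open FirstOrder FirstOrder.Language FirstOrder.Language.Structure

instance myS : Language.graph.Structure (Bool × ℕ) where
  RelMap | .adj => fun x => (x 0).1 = (x 1).1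

@[simp] lemma myS_rel (a b : Bool × ℕ) :
    RelMap adj ![a, b] ↔ a.1 = b.1 := Iff.rfl

def σfun : Bool × ℕ → Bool × ℕ
  | (false, n) => (false, n)
  | (true, n) => (true, n + 1)

@[simp] lemma σfun_false (n : ℕ) : σfun (false, n) = (false, n) := rfl
@[simp] lemma σfun_true (n : ℕ) : σfun (true, n) = (true, n + 1) := rfl

lemma σfun_fst (x : Bool × ℕ) : (σfun x).1 = x.1 := by
  obtain ⟨b, n⟩ := x; cases b <;> rfl

lemma σfun_inj : Function.Injective σfun := by
  rintro ⟨b, n⟩ ⟨c, m⟩ h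
  cases b <;> cases c <;> simp_all [σfun]

def αequiv : (Bool × ℕ) ≃ (Bool × ℕ) where
  toFun x := (!x.1, x.2)
  invFun x := (!x.1, x.2)
  left_inv x := by simp
  right_inv x := by simp

@[simp] lemma αequiv_apply (x : Bool × ℕ) : αequiv x = (!x.1, x.2) := rfl

def myα : (Bool × ℕ) ≃[Language.graph] (Bool × ℕ) where
  toEquiv := αequiv
  map_fun' := fun f _ => isEmptyElim f
  map_rel' := by
    rintro n ⟨⟩ x
    show (αequiv (x 0)).1 = (αequiv (x 1)).1 ↔ (x 0).1 = (x 1).1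
    simp

@[simp] lemma myα_apply (x : Bool × ℕ) : myα x = (!x.1, x.2) := rfl

def myσ : (Bool × ℕ) ↪[Language.graph] (Bool × ℕ) where
  toFun := σfun
  inj' := σfun_inj
  map_fun' := fun f _ => isEmptyElim f
  map_rel' := by
    rintro n ⟨⟩ x
    show (σfun (x 0)).1 = (σfun (x 1)).1 ↔ (x 0).1 = (x 1).1
    simp [σfun_fst]

@[simp] lemma myσ_apply (x : Bool × ℕ) : myσ x = σfun x := rfl

/-- There is a countable structure `M` (an equivalence relation with exactly two infinite
classes), an automorphism `α` swapping the classes, and a self-embedding `σ` which is the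
identity on one class and non-surjective, such that `ασ` (first `α`, then `σ`, i.e. the
function `σ ∘ α`) does not lie in the right coset `σ·Aut(M)` (whose elements are the
functions `α' ∘ σ`). -/
theorem left_coset_ne_right_coset :
    ∃ (M : Type) (_ : Countable M) (_inst : Language.graph.Structure M),
      Equivalence (fun a b : M => RelMap adj ![a, b]) ∧
      (∃ c₀ c₁ : M,
        ¬ RelMap adj ![c₀, c₁] ∧
        (∀ x : M, RelMap adj ![c₀, x] ∨ RelMap adj ![c₁, x]) ∧
        {x : M | RelMap adj ![c₀, x]}.Infinite ∧
        {x : M | RelMap adj ![c₁, x]}.Infinite ∧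
        ∃ (α : M ≃[Language.graph] M) (σ : M ↪[Language.graph] M),
          (∀ x : M, RelMap adj ![c₀, x] ↔ RelMap adj ![c₁, α x]) ∧
          (∀ x : M, RelMap adj ![c₀, x] → σ x = x) ∧
          ¬ Function.Surjective ⇑σ ∧
          ∀ α' : M ≃[Language.graph] M, ⇑σ ∘ ⇑α ≠ ⇑α' ∘ ⇑σ) := by
  refine ⟨Bool × ℕ, inferInstance, myS, ⟨fun a => rfl, fun h => h.symm, fun h h' => h.trans h'⟩,
    (false, 0), (true, 0), by simp, ?_, ?_, ?_, myα, myσ, ?_, ?_, ?_, ?_⟩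
  · rintro ⟨b, n⟩
    cases b
    · exact Or.inl rfl
    · exact Or.inr rfl
  · have h : {x : Bool × ℕ | RelMap adj ![(false, 0), x]} = {x | x.1 = false} := by
      ext x; simp only [Set.mem_setOf_eq, myS_rel]; exact eq_comm
    rw [h]
    exact Set.infinite_of_injective_forall_mem (f := fun n : ℕ => ((false, n) : Bool × ℕ))
      (fun a b h => by simpa using congrArg Prod.snd h) (fun n => rfl)
  · have h : {x : Bool × ℕ | RelMap adj ![(true, 0), x]} = {x | x.1 = true} := by
      ext x; simp only [Set.mem_setOf_eq, myS_rel]; exact eq_comm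
    rw [h]
    exact Set.infinite_of_injective_forall_mem (f := fun n : ℕ => ((true, n) : Bool × ℕ))
      (fun a b h => by simpa using congrArg Prod.snd h) (fun n => rfl)
  · intro x
    rw [myS_rel, myS_rel, myα_apply]
    cases hx : x.1 <;> simp [hx]
  · rintro ⟨b, n⟩ hx
    rw [myS_rel] at hx
    cases b
    · simp
    · exact absurd hx (by simp)
  · intro hs
    obtain ⟨⟨b, n⟩, hb⟩ := hs (true, 0)
    rw [myσ_apply] at hb
    have h2 : (σfun (b, n)).2 = 0 := by rw [hb]
    have h1 : (σfun (b, n)).1 = true := by rw [hb]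
    rw [σfun_fst] at h1
    subst h1
    simp at h2
  · intro α' h
    have h1 : (⇑myσ ∘ ⇑myα) (false, 1) = (⇑α' ∘ ⇑myσ) (false, 1) := congrFun h _
    have hα1 : α' (false, 1) = ((true, 2) : Bool × ℕ) := by
      simpa using h1.symm
    set y := α'.symm (true, 0) with hy
    have hαy : α' y = ((true, 0) : Bool × ℕ) := α'.apply_symm_apply _
    have hrel : RelMap adj (⇑α' ∘ ![y, ((false, 1) : Bool × ℕ)]) ↔
        RelMap adj ![y, ((false, 1) : Bool × ℕ)] := α'.map_rel' adj _
    have hcomp : ⇑α' ∘ ![y, ((false, 1) : Bool × ℕ)] = ![α' y, α' (false, 1)] := by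
      funext i; fin_cases i <;> rfl
    rw [hcomp, hαy, hα1] at hrel
    have hy1 : y.1 = false := by
      have := (myS_rel y (false, 1)).mp (hrel.mp (by rw [myS_rel]))
      simpa using this
    have h2 : (⇑myσ ∘ ⇑myα) y = (⇑α' ∘ ⇑myσ) y := congrFun h y
    obtain ⟨b, m⟩ := y
    simp only at hy1
    subst hy1
    have hl : (⇑myσ ∘ ⇑myα) (false, m) = ((true, m + 1) : Bool × ℕ) := by simp
    have hr : (⇑α' ∘ ⇑myσ) (false, m) = ((true, 0) : Bool × ℕ) := by
      show α' (σfun (false, m)) = _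
      rw [σfun_false]; exact hαy
    rw [hl, hr] at h2
    exact absurd (congrArg Prod.snd h2) (by simp)
end

section
/- An ℵ0-categorical structure M is contractible (has a constant endomorphism) if and only if for every pair of finite tuples c̄₀, c̄₁ from M of the same length there exists an endomorphism σ of M with c̄₀^σ = c̄₁^σ. -/
open FirstOrder FirstOrder.Language

universe u v w x

section Helpers

variable {L : FirstOrder.Language.{u, v}} {M : Type x} [L.Structure M] [Nonempty M]

/-- Merging a finite set of points by an endomorphism, given pairwise merging. -/
private lemma merge_finset
    (H : ∀ (k : ℕ) (c₀ c₁ : Fin k → M), ∃ σ : M →[L] M, ⇑σ ∘ c₀ = ⇑σ ∘ c₁)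
    (s : Finset M) : ∃ (τ : M →[L] M) (c : M), ∀ x ∈ s, τ x = c := by
  classical
  induction s using Finset.induction_on with
  | empty => exact ⟨Hom.id L M, Classical.arbitrary M, fun x hx => absurd hx (by simp)⟩
  | @insert a s _ ih =>
    obtain ⟨τ, c, hc⟩ := ih
    obtain ⟨σ, hσ⟩ := H 1 (fun _ => c) (fun _ => τ a)
    refine ⟨σ.comp τ, σ c, fun x hx => ?_⟩
    rcases Finset.mem_insert.1 hx with rfl | hx
    · exact (congrFun hσ 0).symm
    · simp only [Hom.comp_apply, hc x hx]

/-- Transfer an isomorphism from `ℵ₀`-categoricity to two given countably infinite models. -/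
private lemma iso_of_categorical {T : L.Theory}
    (hcat : Cardinal.Categorical (Cardinal.aleph0 : Cardinal.{w}) T)
    (A : Type*) (B : Type*) [L.Structure A] [L.Structure B] [A ⊨ T] [B ⊨ T]
    [Countable A] [Infinite A] [Countable B] [Infinite B] : Nonempty (B ≃[L] A) := by
  haveI : Nonempty A := inferInstance
  haveI : Nonempty B := inferInstance
  let eA : A ≃ ULift.{w} ℕ :=
    ((nonempty_denumerable A).some.eqv).trans Equiv.ulift.symm
  let eB : B ≃ ULift.{w} ℕ :=
    ((nonempty_denumerable B).some.eqv).trans Equiv.ulift.symm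
  let MA : T.ModelType := Theory.ModelType.equivInduced (M := Theory.ModelType.of T A) eA
  let MB : T.ModelType := Theory.ModelType.equivInduced (M := Theory.ModelType.of T B) eB
  have hcard : (Cardinal.mk (ULift.{w} ℕ)) = Cardinal.aleph0 := by simp
  obtain ⟨g⟩ := hcat MB MA (by exact hcard) (by exact hcard)
  have gA : A ≃[L] MA := by exact Equiv.inducedStructureEquiv eA
  have gB : B ≃[L] MB := by exact Equiv.inducedStructureEquiv eB
  exact ⟨(gA.symm.comp g).comp gB⟩

end Helpers

set_option maxHeartbeats 1000000 in
/-- An ℵ₀-categorical structure is contractible (has a constant endomorphism) iff any two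
finite tuples of the same length can be merged by an endomorphism. -/
theorem contractible_iff_tuples_mergeable (L : Language) [L.IsRelational]
    (hL : L.card ≤ Cardinal.aleph0) (M : Type*) [L.Structure M] [Countable M] [Nonempty M]
    (hcat : Cardinal.Categorical Cardinal.aleph0 (L.completeTheory M)) :
    (∃ (h : M →[L] M) (c : M), ∀ x, h x = c) ↔
      ∀ (k : ℕ) (c₀ c₁ : Fin k → M), ∃ σ : M →[L] M, ⇑σ ∘ c₀ = ⇑σ ∘ c₁ := by
  constructor
  · rintro ⟨h, c, hc⟩ k c₀ c₁
    exact ⟨h, funext fun i => by simp [hc]⟩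
  intro H
  suffices h : ∃ a : M, ∀ (n : ℕ) (R : L.Relations n) (x : Fin n → M),
      Structure.RelMap R x → Structure.RelMap R (fun _ => a) by
    obtain ⟨a, ha⟩ := h
    exact ⟨⟨fun _ => a, fun {n} f => isEmptyElim f, fun {n} r x hx => ha n r x hx⟩, a,
      fun _ => rfl⟩
  cases finite_or_infinite M with
  | inl hfin =>
    haveI := Fintype.ofFinite M
    obtain ⟨τ, c, hc⟩ := merge_finset H (Finset.univ : Finset M)
    refine ⟨c, fun n R x hx => ?_⟩
    have h2 : ⇑τ ∘ x = fun _ => c := funext fun i => hc _ (Finset.mem_univ _)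
    rw [← h2]
    exact τ.map_rel R x hx
  | inr hinf =>
    classical
    set T := L.completeTheory M with hT
    let J := Σ n : ℕ, Σ R : L.Relations n, {x : Fin n → M // Structure.RelMap R x}
    let sent : J → (L[[Unit]]).Sentence := fun j =>
      Formula.equivSentence (Relations.formula j.2.1 (fun _ => Term.var ()))
    let Tfin : Finset J → (L[[Unit]]).Theory := fun s =>
      ((L.lhomWithConstants Unit).onTheory T) ∪ (sent '' ↑s)
    -- Each finite stage is satisfiable, by merging the relevant tuples in `M`.
    have hstage : ∀ s : Finset J, (Tfin s).IsSatisfiable := by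
      intro s
      obtain ⟨τ, c, hc⟩ := merge_finset H (s.biUnion fun j => Finset.univ.image j.2.2.1)
      letI : (constantsOn Unit).Structure M := constantsOn.structure (fun _ => c)
      have hM : M ⊨ Tfin s := by
        rw [Theory.model_union_iff]
        constructor
        · exact (LHom.onTheory_model _ _).2 inferInstance
        · rw [Theory.model_iff]
          rintro φ ⟨j, hj, rfl⟩
          show (Formula.equivSentence (Relations.formula j.2.1 (fun _ => Term.var ()))).Realize M
          rw [Formula.realize_equivSentence, Formula.realize_rel]
          have h1 : Structure.RelMap j.2.1 (⇑τ ∘ j.2.2.1) := τ.map_rel _ _ j.2.2.2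
          have h2 : ⇑τ ∘ j.2.2.1 = fun _ => c := funext fun i =>
            hc _ (Finset.mem_biUnion.2 ⟨j, hj, Finset.mem_image.2 ⟨i, Finset.mem_univ i, rfl⟩⟩)
          rw [h2] at h1
          convert h1 using 2
          rfl
      exact Theory.Model.isSatisfiable M
    -- Hence the whole theory with a constant merging everything is satisfiable.
    have hsat : (((L.lhomWithConstants Unit).onTheory T) ∪ Set.range sent).IsSatisfiable := by
      have hrange : Set.range sent = ⋃ s : Finset J, sent '' ↑s := by
        ext φ
        simp only [Set.mem_range, Set.mem_iUnion, Set.mem_image, Finset.mem_coe]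
        constructor
        · rintro ⟨j, rfl⟩; exact ⟨{j}, j, Finset.mem_singleton_self j, rfl⟩
        · rintro ⟨s, j, _, rfl⟩; exact ⟨j, rfl⟩
      haveI : Nonempty (Finset J) := ⟨∅⟩
      rw [hrange, Set.union_iUnion]
      rw [Theory.isSatisfiable_directed_union_iff]
      · exact hstage
      · exact Monotone.directed_le fun s t hst =>
          Set.union_subset_union_right _ (Set.image_mono hst)
    obtain ⟨N₀⟩ := hsat
    letI : L.Structure N₀ := (L.lhomWithConstants Unit).reduct N₀
    haveI : (L.lhomWithConstants Unit).IsExpansionOn (N₀ : Type _) :=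
      LHom.isExpansionOn_reduct (L.lhomWithConstants Unit) (N₀ : Type _)
    haveI hNT : (N₀ : Type _) ⊨ T :=
      (LHom.onTheory_model (L.lhomWithConstants Unit) T).1
        (N₀.is_model.mono Set.subset_union_left)
    have hMN : M ≅[L] N₀ :=
      elementarilyEquivalent_iff.2 fun φ =>
        (realize_iff_of_model_completeTheory M N₀ φ).symm
    haveI : Infinite (N₀ : Type _) := hMN.infinite
    set b : (N₀ : Type _) := (L.con () : N₀) with hb
    have hbrel : ∀ j : J, Structure.RelMap (L := L) j.2.1 (fun _ : Fin j.1 => b) := by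
      intro j
      have hs : N₀ ⊨ sent j :=
        N₀.is_model.realize_of_mem _ (Set.mem_union_right _ ⟨j, rfl⟩)
      have hs' : (Formula.equivSentence (Relations.formula j.2.1 (fun _ => Term.var ()))).Realize
          (N₀ : Type _) := hs
      rw [Formula.realize_equivSentence, Formula.realize_rel] at hs'
      convert hs' using 2
      rfl
    -- Downward Löwenheim–Skolem to a countable elementary substructure containing `b`.
    obtain ⟨S, hbS, hScard⟩ :=
      exists_elementarySubstructure_card_eq L ({b} : Set N₀) Cardinal.aleph0 le_rfl
        (by simp) (by simpa using hL) (by simp [Cardinal.aleph0_le_mk (N₀ : Type _)])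
    have hSc : Cardinal.mk S = Cardinal.aleph0 := Cardinal.lift_inj.1 hScard
    haveI : Infinite S := by
      rw [Cardinal.infinite_iff, hSc]
    haveI : Countable S := by
      rw [← Cardinal.mk_le_aleph0_iff, hSc]
    have hSN : (S : Type _) ≅[L] N₀ := S.elementarilyEquivalent
    haveI : (S : Type _) ⊨ T := hSN.symm.theory_model (T := T)
    haveI : M ⊨ T := inferInstance
    obtain ⟨g⟩ := iso_of_categorical hcat M (S : Type _)
    refine ⟨g ⟨b, hbS rfl⟩, fun n R x hx => ?_⟩
    -- the relation holds on the constant tuple at `b` in `N₀`, hence in `S`, hence at `a` in `M`.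
    have hS : Structure.RelMap (L := L) R (fun _ : Fin n => (⟨b, hbS rfl⟩ : S)) :=
      hbrel ⟨n, R, x, hx⟩
    have := (g.map_rel R (fun _ : Fin n => (⟨b, hbS rfl⟩ : S))).2 hS
    convert this using 2
    rfl
end
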